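/- Let f(x₁, x₂) be jointly L-smooth in (x₁, x₂) and convex in x₁ for fixed x₂ and convex in x₂ for fixed x₁. Then for all x₁, x₂, x̄₁, x̄₂: f(x₁, x₂) ≤ f(x₁, x̄₂) + f(x̄₁, x₂) − f(x̄₁, x̄₂) + (L/2)‖x₁ − x̄₁‖² + (L/2)‖x₂ − x̄₂‖². -/

import Mathlib

theorem block_convex_surrogate {n m : ℕ}
    (f : EuclideanSpace ℝ (Fin n) → EuclideanSpace ℝ (Fin m) → ℝ)
    (f₁' : EuclideanSpace ℝ (Fin n) → EuclideanSpace ℝ (Fin m) → EuclideanSpace ℝ (Fin n))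
    (f₂' : EuclideanSpace ℝ (Fin n) → EuclideanSpace ℝ (Fin m) → EuclideanSpace ℝ (Fin m))
    (hgrad₁ : ∀ x₁ x₂, HasGradientAt (fun u => f u x₂) (f₁' x₁ x₂) x₁)
    (hgrad₂ : ∀ x₁ x₂, HasGradientAt (fun v => f x₁ v) (f₂' x₁ x₂) x₂)
    (L : ℝ) (hL : 0 ≤ L)
    (hLip : ∀ x₁ x₂ x₁' x₂', ‖f₁' x₁ x₂ - f₁' x₁' x₂'‖ ^ 2 + ‖f₂' x₁ x₂ - f₂' x₁' x₂'‖ ^ 2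
      ≤ L ^ 2 * (‖x₁ - x₁'‖ ^ 2 + ‖x₂ - x₂'‖ ^ 2))
    (hconv₁ : ∀ x₂, ConvexOn ℝ Set.univ (fun x₁ => f x₁ x₂))
    (hconv₂ : ∀ x₁, ConvexOn ℝ Set.univ (fun x₂ => f x₁ x₂)) :
    ∀ x₁ x₂ xb₁ xb₂,
      f x₁ x₂ ≤ f x₁ xb₂ + f xb₁ x₂ - f xb₁ xb₂
        + L / 2 * ‖x₁ - xb₁‖ ^ 2 + L / 2 * ‖x₂ - xb₂‖ ^ 2 := by
  intro x₁ x₂ xb₁ xb₂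
  set Δ := x₁ - xb₁ with hΔ
  set g : ℝ → ℝ := fun t => f (xb₁ + t • Δ) x₂ - f (xb₁ + t • Δ) xb₂ with hg
  set C : ℝ := L * ‖x₂ - xb₂‖ * ‖Δ‖ with hC
  -- derivative of g
  have hgd : ∀ t : ℝ, HasDerivAt g
      (inner ℝ (f₁' (xb₁ + t • Δ) x₂ - f₁' (xb₁ + t • Δ) xb₂) Δ : ℝ) t := by
    intro t
    set u := xb₁ + t • Δ with hu
    have hline : HasDerivAt (fun s : ℝ => xb₁ + s • Δ) Δ t := by
      simpa using ((hasDerivAt_id t).smul_const Δ).const_add xb₁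
    have h1 : HasDerivAt (fun s : ℝ => f (xb₁ + s • Δ) x₂)
        ((inner ℝ (f₁' u x₂) Δ : ℝ)) t := by
      have := ((hgrad₁ u x₂).hasFDerivAt.comp_hasDerivAt t hline)
      simp at this
      exact this
    have h2 : HasDerivAt (fun s : ℝ => f (xb₁ + s • Δ) xb₂)
        ((inner ℝ (f₁' u xb₂) Δ : ℝ)) t := by
      have := ((hgrad₁ u xb₂).hasFDerivAt.comp_hasDerivAt t hline)
      simp at this
      exact this
    have := h1.sub h2
    rw [inner_sub_left]
    exact this
  -- bound on the derivative
  have hbound : ∀ t ∈ Set.Icc (0:ℝ) 1,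
      ‖(inner ℝ (f₁' (xb₁ + t • Δ) x₂ - f₁' (xb₁ + t • Δ) xb₂) Δ : ℝ)‖ ≤ C := by
    intro t _
    set u := xb₁ + t • Δ with hu
    have hlip := hLip u x₂ u xb₂
    simp only [sub_self, norm_zero] at hlip
    have h1 : ‖f₁' u x₂ - f₁' u xb₂‖ ≤ L * ‖x₂ - xb₂‖ := by
      nlinarith [norm_nonneg (f₁' u x₂ - f₁' u xb₂), norm_nonneg (x₂ - xb₂),
        norm_nonneg (f₂' u x₂ - f₂' u xb₂), sq_nonneg ‖f₂' u x₂ - f₂' u xb₂‖,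
        mul_nonneg hL (norm_nonneg (x₂ - xb₂))]
    calc ‖(inner ℝ (f₁' u x₂ - f₁' u xb₂) Δ : ℝ)‖
        ≤ ‖f₁' u x₂ - f₁' u xb₂‖ * ‖Δ‖ := norm_inner_le_norm _ _
      _ ≤ (L * ‖x₂ - xb₂‖) * ‖Δ‖ := by
          exact mul_le_mul_of_nonneg_right h1 (norm_nonneg _)
      _ = C := by rw [hC]
  -- mean value inequality
  have hmvt : ‖g 1 - g 0‖ ≤ C * ‖(1:ℝ) - 0‖ := by
    apply (convex_Icc (0:ℝ) 1).norm_image_sub_le_of_norm_hasDerivWithin_le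
      (fun t ht => (hgd t).hasDerivWithinAt) hbound (Set.left_mem_Icc.2 zero_le_one)
      (Set.right_mem_Icc.2 zero_le_one)
  have hg1 : g 1 = f x₁ x₂ - f x₁ xb₂ := by simp [hg, hΔ]
  have hg0 : g 0 = f xb₁ x₂ - f xb₁ xb₂ := by simp [hg]
  rw [hg1, hg0] at hmvt
  have habs := abs_le.mp (by simpa using hmvt)
  nlinarith [sq_nonneg (‖x₁ - xb₁‖ - ‖x₂ - xb₂‖), habs.2,
    mul_nonneg hL (norm_nonneg (x₂ - xb₂)), norm_nonneg (x₁ - xb₁), norm_nonneg (x₂ - xb₂)]
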